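/- Let d ≥ s ≥ 2 with s ≥ ⌊d/2⌋ + 1. Then every finite O-sequence h of multiplicity d and length s satisfies C(s-1, 2) ≤ g(h) ≤ C(s-1, 2) + C(d-s, 2). -/

import Mathlib

/-- The Macaulay bound `a^⟨t⟩`: if `a = C(k_t,t) + C(k_{t-1},t-1) + ⋯ + C(k_j,j)` is the
binomial expansion of `a` in base `t`, then `a^⟨t⟩ = C(k_t+1,t+1) + ⋯ + C(k_j+1,j+1)`.
Computed greedily; `mac t a = a^⟨t⟩` for `t ≥ 1`. -/
def mac : ℕ → ℕ → ℕ
  | 0, _ => 0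
  | t+1, a =>
    if a = 0 then 0
    else
      Nat.choose (Nat.findGreatest (fun n => Nat.choose n (t+1) ≤ a) (a + t + 1) + 1) (t+2) +
        mac t (a - Nat.choose (Nat.findGreatest (fun n => Nat.choose n (t+1) ≤ a) (a + t + 1)) (t+1))

/-- `h : ℕ → ℕ` is a finite O-sequence of length `s`: `h 0 = 1`, the entries `h 0, …, h (s-1)`
are positive, entries from index `s` on are zero, and `h (t+1) ≤ (h t)^⟨t⟩` for all `t ≥ 1`. -/
def IsOSeq (h : ℕ → ℕ) (s : ℕ) : Prop :=
  h 0 = 1 ∧ (∀ i, 0 < h i ↔ i < s) ∧ ∀ t, 1 ≤ t → h (t + 1) ≤ mac t (h t)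

/-- The multiplicity `e(h) = h_0 + ⋯ + h_{s-1}` of a finite O-sequence of length `s`. -/
def mult (h : ℕ → ℕ) (s : ℕ) : ℕ := ∑ i ∈ Finset.range s, h i

/-- The genus `g(h) = Σ_{j=2}^{s-1} (j-1)·h_j` of a finite O-sequence of length `s`. -/
def genus (h : ℕ → ℕ) (s : ℕ) : ℕ := ∑ j ∈ Finset.range s, (j - 1) * h j

/-- The sequence obtained from `h` by increasing the `i`-th entry by `1`, i.e. `h + e_i`. -/
def addE (h : ℕ → ℕ) (i : ℕ) : ℕ → ℕ := fun j => if j = i then h j + 1 else h j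

/-- The sequence obtained from `h` by decreasing the `i`-th entry by `1`, i.e. `h - e_i`. -/
def subE (h : ℕ → ℕ) (i : ℕ) : ℕ → ℕ := fun j => if j = i then h j - 1 else h j

/-- The total order on finite O-sequences of the same length: `oLT h k` iff `h_ℓ < k_ℓ`
where `ℓ = max{ j : h_j ≠ k_j }`. -/
def oLT (h k : ℕ → ℕ) : Prop := ∃ ℓ, h ℓ < k ℓ ∧ ∀ j, ℓ < j → h j = k j

/-- The set of genera of finite O-sequences of multiplicity `d` and length `s`. -/
def genusSet (d s : ℕ) : Set ℕ := {g | ∃ h, IsOSeq h s ∧ mult h s = d ∧ genus h s = g}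

/-- `G_d`: the set of genera of finite O-sequences of multiplicity `d` (of any length). -/
def GSet (d : ℕ) : Set ℕ := {g | ∃ h s, IsOSeq h s ∧ mult h s = d ∧ genus h s = g}

/-- `g` is a gap in `R_d = [0, C(d-1,2)]`: it lies in the range but is not the genus of any
finite O-sequence of multiplicity `d`. -/
def IsGap (d g : ℕ) : Prop :=
  g ≤ Nat.choose (d - 1) 2 ∧ ∀ h s, IsOSeq h s → mult h s = d → genus h s ≠ g

/-- The O-sequence `(1, d-s+1, 1^{s-2})`, minimal in `𝒢_d^s`. -/
def minSeq (d s : ℕ) : ℕ → ℕ :=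
  fun j => if j = 0 then 1 else if j = 1 then d - s + 1 else if j < s then 1 else 0

/-- The O-sequence `(1, 2^{d-s}, 1^{2s-d-1})`, maximal in `𝒢_d^s`. -/
def maxSeq (d s : ℕ) : ℕ → ℕ :=
  fun j => if j = 0 then 1 else if j ≤ d - s then 2 else if j < s then 1 else 0

/-- The O-sequence `(1, d-1)`. -/
def twoSeq (d : ℕ) : ℕ → ℕ := fun j => if j = 0 then 1 else if j = 1 then d - 1 else 0

/-- The operation `h ↦ h - e_{s-1} + e_1` on a sequence of length `s`. -/
def downUp (h : ℕ → ℕ) (s : ℕ) : ℕ → ℕ :=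
  fun j => if j = s - 1 then h j - 1 else if j = 1 then h j + 1 else h j

/-- The largest index `1 ≤ j ≤ s-1` with `h j > 1` (and `0` if there is none). -/
def topIdx (h : ℕ → ℕ) (s : ℕ) : ℕ := Nat.findGreatest (fun j => 1 < h j) (s - 1)

/-- The operation `h ↦ h - e_i + e_1` where `i = topIdx h s`. -/
def shiftDown (h : ℕ → ℕ) (s : ℕ) : ℕ → ℕ :=
  fun j => if j = topIdx h s then h j - 1 else if j = 1 then h j + 1 else h j

/-- Auxiliary list `[m_n, m_{n-1}, …, m_1]` for the recursively defined sequence `(m_d)`. -/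
def mListAux : ℕ → List ℕ
  | 0 => []
  | n+1 =>
    let prev := mListAux n
    let newVal :=
      if n = 0 then 0
      else
        (List.range' 2 (n - 1)).foldl
          (fun M k =>
            if Nat.choose k 2 - 1 ≤ M then max M (prev.getD (k - 1) 0 + Nat.choose k 2) else M)
          (prev.getD 0 0)
    newVal :: prev

/-- The sequence `(m_d)_{d ≥ 1}`: `m_1 = 0` and, for `d ≥ 2`, `m_d` is obtained from
`M := m_{d-1}` by running over `k = 2, …, d-1` and replacing `M` by
`max M (m_{d-k} + C(k,2))` whenever `C(k,2) - 1 ≤ M`. -/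
def mSeq (d : ℕ) : ℕ := (mListAux d).getD 0 0

lemma mac_zero (t : ℕ) : mac t 0 = 0 := by cases t <;> simp [mac]

lemma mac_one (t : ℕ) : mac (t+1) 1 = 1 := by
  have hfg : Nat.findGreatest (fun n => Nat.choose n (t+1) ≤ 1) (1 + t + 1) = t+1 := by
    rw [Nat.findGreatest_eq_iff]
    refine ⟨by omega, fun _ => by simp, fun n hn hn2 => ?_⟩
    have : n = t+2 := by omega
    subst this
    rw [show t+2 = (t+1)+1 from rfl, Nat.choose_succ_self_right]
    omega
  rw [mac, if_neg one_ne_zero, hfg]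
  simp [mac_zero]

lemma sum_range_id_choose (n : ℕ) : ∑ i ∈ Finset.range n, i = Nat.choose n 2 := by
  have h2 := Finset.sum_range_id_mul_two n
  rw [Nat.choose_two_right]
  omega

lemma choose_bound (m n : ℕ) (h : m ≤ n) :
    Nat.choose m 2 + (m-1)*(n-m) ≤ Nat.choose n 2 := by
  induction n, h using Nat.le_induction with
  | base => simp
  | succ n hmn ih =>
    have h1 : (m-1)*(n+1-m) = (m-1)*(n-m) + (m-1) := by
      rw [show n+1-m = (n-m)+1 by omega, Nat.mul_add, mul_one]
    have h2 : Nat.choose (n+1) 2 = n + Nat.choose n 2 := by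
      rw [Nat.choose_succ_succ, Nat.choose_one_right]
    omega


/-- Let `d ≥ s ≥ 2` with `s ≥ ⌊d/2⌋ + 1`. Then every finite O-sequence of
multiplicity `d` and length `s` satisfies `C(s-1,2) ≤ g(h) ≤ C(s-1,2) + C(d-s,2)`. -/
theorem stmt10 (d s : ℕ) (hs : 2 ≤ s) (hsd : s ≤ d) (hs2 : d / 2 + 1 ≤ s)
    (h : ℕ → ℕ) (hO : IsOSeq h s) (he : mult h s = d) :
    Nat.choose (s - 1) 2 ≤ genus h s ∧
    genus h s ≤ Nat.choose (s - 1) 2 + Nat.choose (d - s) 2 := by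
  obtain ⟨h0, hpos, hmac⟩ := hO
  set m := Nat.findGreatest (fun j => 1 < h j) (s - 1) with hm
  have hms : m ≤ s - 1 := Nat.findGreatest_le _
  have htail : ∀ j, m < j → j < s → h j = 1 := by
    intro j hj hjs
    have h1 : ¬ (1 < h j) :=
      Nat.findGreatest_is_greatest (P := fun j => 1 < h j) hj (by omega)
    have := (hpos j).mpr hjs
    omega
  have hbig : ∀ j, 1 ≤ j → j ≤ m → 2 ≤ h j := by
    intro j hj1 hjm
    by_contra hc
    have hj1' : h j = 1 := by
      have := (hpos j).mpr (by omega)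
      omega
    have hone : ∀ k, j ≤ k → k ≤ m → h k = 1 := by
      intro k hk
      induction k, hk using Nat.le_induction with
      | base => intro _; exact hj1'
      | succ k hk ih =>
        intro hkm
        have hk1 : h k = 1 := ih (by omega)
        have hle : h (k+1) ≤ mac k (h k) := hmac k (by omega)
        rw [hk1] at hle
        obtain ⟨k', rfl⟩ : ∃ k', k = k' + 1 := ⟨k - 1, by omega⟩
        rw [mac_one] at hle
        have := (hpos (k'+1+1)).mpr (by omega)
        omega
    have hPm : 1 < h m := by
      have hiff := (Nat.findGreatest_eq_iff (P := fun j => 1 < h j) (k := s-1) (m := m)).mp hm.symm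
      exact hiff.2.1 (by omega)
    have := hone m hjm (le_refl m)
    omega
  set n := d - s with hn
  have hpos' : ∀ j ∈ Finset.range s, 1 ≤ h j := fun j hj =>
    (hpos j).mpr (Finset.mem_range.mp hj)
  have hsum_split : ∑ j ∈ Finset.range s, h j
      = (∑ j ∈ Finset.range s, (h j - 1)) + s := by
    have heq : ∑ j ∈ Finset.range s, h j = ∑ j ∈ Finset.range s, ((h j - 1) + 1) :=
      Finset.sum_congr rfl fun j hj => by have := hpos' j hj; omega
    rw [heq, Finset.sum_add_distrib, Finset.sum_const, Finset.card_range, smul_eq_mul, mul_one]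
  have hsum_a : ∑ j ∈ Finset.range s, (h j - 1) = n := by
    have hd := he
    rw [mult] at hd
    omega
  obtain ⟨s', rfl⟩ : ∃ s', s = s' + 1 := ⟨s - 1, by omega⟩
  have hrs : ∑ j ∈ Finset.range (s'+1), (j-1) = Nat.choose s' 2 := by
    rw [Finset.sum_range_succ']
    simp [sum_range_id_choose]
  have hgenus : genus h (s'+1)
      = (∑ j ∈ Finset.range (s'+1), (j-1) * (h j - 1)) + Nat.choose s' 2 := by
    rw [genus, ← hrs, ← Finset.sum_add_distrib]
    refine Finset.sum_congr rfl fun j hj => ?_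
    have h1 := hpos' j hj
    have h2 : h j = (h j - 1) + 1 := by omega
    calc (j-1) * h j = (j-1) * ((h j - 1) + 1) := by rw [← h2]
    _ = (j-1)*(h j - 1) + (j-1) := by ring
  have hs1 : s' + 1 - 1 = s' := by omega
  constructor
  · rw [hgenus, hs1]; omega
  -- upper bound
  have hm1s : m + 1 ≤ s' + 1 := by omega
  have hzero_out : ∀ j ∈ Finset.range (s'+1), j ∉ Finset.range (m+1) → h j - 1 = 0 := by
    intro j hj hj'
    have hj1 : ¬ j < m + 1 := Finset.mem_range.not.mp hj'
    have := htail j (by omega) (Finset.mem_range.mp hj)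
    omega
  have hTsub : ∑ j ∈ Finset.range (s'+1), (j-1)*(h j - 1)
      = ∑ j ∈ Finset.range (m+1), (j-1)*(h j - 1) := by
    refine (Finset.sum_subset (Finset.range_subset_range.mpr hm1s) ?_).symm
    intro j hj hj'
    rw [hzero_out j hj hj', mul_zero]
  have hAsub : ∑ j ∈ Finset.range (s'+1), (h j - 1)
      = ∑ j ∈ Finset.range (m+1), (h j - 1) :=
    (Finset.sum_subset (Finset.range_subset_range.mpr hm1s) hzero_out).symm
  have hT1 : ∑ j ∈ Finset.range (m+1), (j-1)*(h j - 1)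
      = ∑ i ∈ Finset.range m, i * (h (i+1) - 1) := by
    rw [Finset.sum_range_succ']
    simp
  have hA1 : ∑ i ∈ Finset.range m, (h (i+1) - 1) = n := by
    have hx := hsum_a
    rw [hAsub, Finset.sum_range_succ'] at hx
    simpa [h0] using hx
  have hb1 : ∀ i ∈ Finset.range m, 1 ≤ h (i+1) - 1 := fun i hi => by
    have hmem := Finset.mem_range.mp hi
    have := hbig (i+1) (by omega) (by omega)
    omega
  have hmn : m ≤ n := by
    calc m = ∑ _i ∈ Finset.range m, 1 := by simp
    _ ≤ ∑ i ∈ Finset.range m, (h (i+1) - 1) := Finset.sum_le_sum hb1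
    _ = n := hA1
  have hA2 : ∑ i ∈ Finset.range m, (h (i+1) - 1 - 1) + m = n := by
    have heq : ∑ i ∈ Finset.range m, (h (i+1) - 1)
        = ∑ i ∈ Finset.range m, ((h (i+1) - 1 - 1) + 1) :=
      Finset.sum_congr rfl fun i hi => by have := hb1 i hi; omega
    rw [heq, Finset.sum_add_distrib, Finset.sum_const, Finset.card_range, smul_eq_mul,
      mul_one] at hA1
    omega
  have hT2 : ∑ i ∈ Finset.range m, i * (h (i+1) - 1)
      = ∑ i ∈ Finset.range m, i * (h (i+1) - 1 - 1) + Nat.choose m 2 := by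
    rw [← sum_range_id_choose, ← Finset.sum_add_distrib]
    refine Finset.sum_congr rfl fun i hi => ?_
    have h1 := hb1 i hi
    have h2 : h (i+1) - 1 = (h (i+1) - 1 - 1) + 1 := by omega
    calc i * (h (i+1) - 1) = i * ((h (i+1) - 1 - 1) + 1) := by rw [← h2]
    _ = i * (h (i+1) - 1 - 1) + i := by ring
  have hT3 : ∑ i ∈ Finset.range m, i * (h (i+1) - 1 - 1) ≤ (m-1) * (n - m) := by
    calc ∑ i ∈ Finset.range m, i * (h (i+1) - 1 - 1)
        ≤ ∑ i ∈ Finset.range m, (m-1) * (h (i+1) - 1 - 1) :=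
          Finset.sum_le_sum fun i hi =>
            Nat.mul_le_mul_right _ (by have := Finset.mem_range.mp hi; omega)
    _ = (m-1) * ∑ i ∈ Finset.range m, (h (i+1) - 1 - 1) := by rw [Finset.mul_sum]
    _ ≤ (m-1) * (n-m) := Nat.mul_le_mul_left _ (by omega)
  have hfin := choose_bound m n hmn
  rw [hgenus, hs1]
  have hkey : ∑ j ∈ Finset.range (s'+1), (j-1)*(h j - 1) ≤ Nat.choose n 2 := by
    rw [hTsub, hT1, hT2]
    omega
  omega
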